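/- Let d ≥ 2, let Λ ⊆ K̃^d be a unimodular lattice, and let v₁,…,v_d ∈ Λ be linearly independent vectors with ‖v_i‖ = λ_i(Λ) for each i. Then for every 1 ≤ k ≤ d, the wedge product satisfies ‖v₁ ∧ v₂ ∧ … ∧ v_k‖ ≤ 1, where the norm on the k-th exterior power Λ^k K̃^d is the maximum of the absolute values of the coordinates with respect to the standard basis {e_{j₁} ∧ … ∧ e_{j_k} : j₁ < … < j_k}. (In particular ‖f_Mink(Λ)‖_flag ≤ 1.) -/

import Mathlib

noncomputable section

open scoped Classical

variable (Fq : Type) [Field Fq] [Fintype Fq]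

/-- `K̃ = 𝔽_q((x⁻¹))`, realized as formal Laurent series in `t = x⁻¹`. -/
abbrev Kt := LaurentSeries Fq

/-- The element `x` of `K̃` (the inverse of the Laurent series variable). -/
def Kx : Kt Fq := HahnSeries.single (-1 : ℤ) 1

/-- Absolute value `|f| = q^{deg f}`, i.e. `q^{-order f}` in terms of `t = x⁻¹`. -/
def Kabs (f : Kt Fq) : ℝ := if f = 0 then 0 else (Fintype.card Fq : ℝ) ^ (-f.order)

/-- The ring embedding of `R = 𝔽_q[x]` into `K̃`. -/
def polyK : Polynomial Fq →+* Kt Fq := (Polynomial.aeval (Kx Fq)).toRingHom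

/-- Sup norm on `K̃^d`. -/
def vnorm {d : ℕ} (v : Fin d → Kt Fq) : ℝ := ⨆ i, Kabs Fq (v i)

/-- The lattice `g·R^d`. -/
def lattice {d : ℕ} (g : Matrix (Fin d) (Fin d) (Kt Fq)) : Set (Fin d → Kt Fq) :=
  {v | ∃ c : Fin d → Polynomial Fq, v = g.mulVec fun j => polyK Fq (c j)}

/-- `i`-th successive minimum of `Λ` with respect to a norm `nrm`: the least `r > 0` such that
`Λ` contains `i` linearly independent vectors of norm at most `r`. -/
def minimaN {d : ℕ} (nrm : (Fin d → Kt Fq) → ℝ) (Λ : Set (Fin d → Kt Fq)) (i : ℕ) : ℝ :=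
  sInf {r : ℝ | 0 < r ∧ ∃ v : Fin i → Fin d → Kt Fq,
    (∀ j, v j ∈ Λ) ∧ LinearIndependent (Kt Fq) v ∧ ∀ j, nrm (v j) ≤ r}

/-- `i`-th successive minimum with respect to the sup norm. -/
def minima {d : ℕ} (Λ : Set (Fin d → Kt Fq)) (i : ℕ) : ℝ := minimaN Fq (vnorm Fq) Λ i

/-- Covering radius of `Λ` with respect to the norm `nrm`. -/
def covRad {d : ℕ} (nrm : (Fin d → Kt Fq) → ℝ) (Λ : Set (Fin d → Kt Fq)) : ℝ :=
  ⨆ w : Fin d → Kt Fq, ⨅ u : Λ, nrm (w - u.1)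

/-- Length of the shortest nonzero vector of `Λ`. -/
def ell {d : ℕ} (Λ : Set (Fin d → Kt Fq)) : ℝ :=
  sInf {r : ℝ | ∃ v ∈ Λ, v ≠ 0 ∧ vnorm Fq v = r}

/-- `Λ` is well rounded: it contains `d` linearly independent vectors of norm `ℓ(Λ)`. -/
def IsWellRounded {d : ℕ} (Λ : Set (Fin d → Kt Fq)) : Prop :=
  ∃ v : Fin d → Fin d → Kt Fq, (∀ j, v j ∈ Λ) ∧ LinearIndependent (Kt Fq) v ∧
    ∀ j, vnorm Fq (v j) = ell Fq Λ

/-- The multiplicative "norm" `N(v) = ∏ |v i|`. -/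
def Nprod {d : ℕ} (v : Fin d → Kt Fq) : ℝ := ∏ i, Kabs Fq (v i)

/-- The Minkowski function `μ(Λ) = sup_w inf_{u ∈ Λ} N(w - u)`. -/
def mink {d : ℕ} (Λ : Set (Fin d → Kt Fq)) : ℝ :=
  ⨆ w : Fin d → Kt Fq, ⨅ u : Λ, Nprod Fq (w - u.1)

/-! ### Auxiliary lemmas -/

section Aux

abbrev qR : ℝ := (Fintype.card Fq : ℝ)

lemma one_lt_qR : 1 < qR Fq := by exact_mod_cast Fintype.one_lt_card

lemma qR_pos : 0 < qR Fq := lt_trans one_pos (one_lt_qR Fq)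

lemma qR_ne_zero : qR Fq ≠ 0 := ne_of_gt (qR_pos Fq)

variable {Fq}

lemma Kabs_zero : Kabs Fq 0 = 0 := if_pos rfl

lemma Kabs_of_ne {f : Kt Fq} (h : f ≠ 0) : Kabs Fq f = qR Fq ^ (-f.order) := if_neg h

lemma Kabs_pos {f : Kt Fq} (h : f ≠ 0) : 0 < Kabs Fq f := by
  rw [Kabs_of_ne h]; exact zpow_pos (qR_pos Fq) _

lemma Kabs_nonneg (f : Kt Fq) : 0 ≤ Kabs Fq f := by
  by_cases h : f = 0
  · simp [h, Kabs_zero]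
  · exact (Kabs_pos h).le

lemma Kabs_ne_zero {f : Kt Fq} (h : f ≠ 0) : Kabs Fq f ≠ 0 := ne_of_gt (Kabs_pos h)

lemma Kabs_mul (f g : Kt Fq) : Kabs Fq (f * g) = Kabs Fq f * Kabs Fq g := by
  by_cases hf : f = 0
  · simp [hf, Kabs_zero]
  by_cases hg : g = 0
  · simp [hg, Kabs_zero]
  rw [Kabs_of_ne (mul_ne_zero hf hg), Kabs_of_ne hf, Kabs_of_ne hg,
    HahnSeries.order_mul hf hg, neg_add, zpow_add₀ (qR_ne_zero Fq)]

lemma Kabs_neg (f : Kt Fq) : Kabs Fq (-f) = Kabs Fq f := by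
  by_cases hf : f = 0
  · simp [hf]
  · rw [Kabs_of_ne (neg_ne_zero.mpr hf), Kabs_of_ne hf, HahnSeries.order_neg]

lemma Kabs_add_le (f g : Kt Fq) : Kabs Fq (f + g) ≤ max (Kabs Fq f) (Kabs Fq g) := by
  by_cases hfg : f + g = 0
  · simp only [hfg, Kabs_zero]
    exact le_max_of_le_left (Kabs_nonneg f)
  by_cases hf : f = 0
  · simp [hf]
  by_cases hg : g = 0
  · simp [hg]
  rw [Kabs_of_ne hfg, Kabs_of_ne hf, Kabs_of_ne hg]
  have h := HahnSeries.min_order_le_order_add hfg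
  rcases min_le_iff.mp (le_refl (min f.order g.order)) with h' | h'
  · rcases le_total f.order g.order with hle | hle
    · exact le_max_of_le_left (zpow_le_zpow_right₀ (one_lt_qR Fq).le
        (neg_le_neg ((min_eq_left hle ▸ h))))
    · exact le_max_of_le_right (zpow_le_zpow_right₀ (one_lt_qR Fq).le
        (neg_le_neg ((min_eq_right hle ▸ h))))
  · rcases le_total f.order g.order with hle | hle
    · exact le_max_of_le_left (zpow_le_zpow_right₀ (one_lt_qR Fq).le
        (neg_le_neg ((min_eq_left hle ▸ h))))
    · exact le_max_of_le_right (zpow_le_zpow_right₀ (one_lt_qR Fq).le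
        (neg_le_neg ((min_eq_right hle ▸ h))))

lemma Kabs_sum_le {ι : Type*} (s : Finset ι) (f : ι → Kt Fq) {B : ℝ} (hB : 0 ≤ B)
    (h : ∀ i ∈ s, Kabs Fq (f i) ≤ B) : Kabs Fq (∑ i ∈ s, f i) ≤ B := by
  induction s using Finset.cons_induction with
  | empty => simpa [Kabs_zero] using hB
  | cons a s ha ih =>
    rw [Finset.sum_cons]
    refine le_trans (Kabs_add_le _ _) (max_le (h a (Finset.mem_cons_self a s)) ?_)
    exact ih fun i hi => h i (Finset.mem_cons_of_mem hi)

lemma Kabs_prod {ι : Type*} (s : Finset ι) (f : ι → Kt Fq) :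
    Kabs Fq (∏ i ∈ s, f i) = ∏ i ∈ s, Kabs Fq (f i) := by
  induction s using Finset.cons_induction with
  | empty => simp [Kabs_of_ne one_ne_zero]
  | cons a s ha ih => rw [Finset.prod_cons, Finset.prod_cons, Kabs_mul, ih]

lemma Kabs_le_zpow_iff {f : Kt Fq} (hf : f ≠ 0) {m : ℤ} :
    Kabs Fq f ≤ qR Fq ^ (-m) ↔ m ≤ f.order := by
  rw [Kabs_of_ne hf, zpow_le_zpow_iff_right₀ (one_lt_qR Fq), neg_le_neg_iff]

lemma coeff_eq_zero_of_Kabs_le {f : Kt Fq} {m n : ℤ} (h : Kabs Fq f ≤ qR Fq ^ (-m))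
    (hn : n < m) : f.coeff n = 0 := by
  by_cases hf : f = 0
  · simp [hf]
  · exact HahnSeries.coeff_eq_zero_of_lt_order (lt_of_lt_of_le hn ((Kabs_le_zpow_iff hf).mp h))

lemma Kabs_le_of_forall_coeff {f : Kt Fq} {m : ℤ} (h : ∀ n < m, f.coeff n = 0) :
    Kabs Fq f ≤ qR Fq ^ (-m) := by
  by_cases hf : f = 0
  · simp only [hf, Kabs_zero]; positivity
  · exact (Kabs_le_zpow_iff hf).mpr (le_of_not_gt fun hlt =>
      (HahnSeries.coeff_order_eq_zero.not.mpr hf) (h _ hlt))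

lemma zpow_le_Kabs_of_coeff_ne {f : Kt Fq} {n : ℤ} (h : f.coeff n ≠ 0) :
    qR Fq ^ (-n) ≤ Kabs Fq f := by
  have hf : f ≠ 0 := fun h0 => h (by simp [h0])
  rw [Kabs_of_ne hf]
  exact zpow_le_zpow_right₀ (one_lt_qR Fq).le
    (neg_le_neg (HahnSeries.order_le_of_coeff_ne_zero h))

lemma zpow_prod_eq {ι : Type*} (s : Finset ι) (m : ι → ℤ) :
    ∏ i ∈ s, qR Fq ^ (m i) = qR Fq ^ (∑ i ∈ s, m i) := by
  induction s using Finset.cons_induction with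
  | empty => simp
  | cons a s ha ih =>
    rw [Finset.prod_cons, Finset.sum_cons, ih, zpow_add₀ (qR_ne_zero Fq)]

end Aux
section Aux2
set_option linter.unusedSectionVars false

variable {Fq}

lemma Kabs_le_vnorm {d : ℕ} (w : Fin d → Kt Fq) (i : Fin d) :
    Kabs Fq (w i) ≤ vnorm Fq w := by
  exact le_ciSup (Set.Finite.bddAbove (Set.finite_range fun i => Kabs Fq (w i))) i

lemma vnorm_nonneg {d : ℕ} [Nonempty (Fin d)] (w : Fin d → Kt Fq) : 0 ≤ vnorm Fq w := by
  obtain ⟨i⟩ := ‹Nonempty (Fin d)›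
  exact le_trans (Kabs_nonneg (w i)) (Kabs_le_vnorm w i)

lemma vnorm_pos {d : ℕ} {w : Fin d → Kt Fq} (hw : w ≠ 0) : 0 < vnorm Fq w := by
  obtain ⟨i, hi⟩ : ∃ i, w i ≠ 0 := by
    by_contra h
    push_neg at h
    exact hw (funext fun i => h i)
  exact lt_of_lt_of_le (Kabs_pos hi) (Kabs_le_vnorm w i)

lemma exists_vnorm_eq {d : ℕ} [Nonempty (Fin d)] (w : Fin d → Kt Fq) :
    ∃ i, vnorm Fq w = Kabs Fq (w i) := by
  obtain ⟨i, hi⟩ := Finite.exists_max fun i => Kabs Fq (w i)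
  exact ⟨i, le_antisymm (ciSup_le hi) (Kabs_le_vnorm w i)⟩

/-- For a nonzero vector, the norm is `q^(-m)` where `m` is the minimal coefficient index. -/
lemma exists_vnorm_zpow {d : ℕ} [Nonempty (Fin d)] {w : Fin d → Kt Fq} (hw : w ≠ 0) :
    ∃ m : ℤ, vnorm Fq w = qR Fq ^ (-m) ∧ (∀ i, Kabs Fq (w i) ≤ qR Fq ^ (-m)) ∧
      ∃ i, (w i).coeff m ≠ 0 := by
  obtain ⟨i₀, hi₀⟩ := exists_vnorm_eq w
  have hne : w i₀ ≠ 0 := by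
    intro h0
    have := vnorm_pos hw
    rw [hi₀, h0, Kabs_zero] at this
    exact lt_irrefl 0 this
  refine ⟨(w i₀).order, by rw [hi₀, Kabs_of_ne hne], ?_, i₀, (HahnSeries.coeff_order_eq_zero.not.mpr hne)⟩
  intro i
  rw [← Kabs_of_ne hne, ← hi₀]
  exact Kabs_le_vnorm w i

/-- Hadamard-type inequality (rows bounded). -/
lemma Kabs_det_le {k : ℕ} (M : Matrix (Fin k) (Fin k) (Kt Fq)) (B : Fin k → ℝ)
    (hB : ∀ i, 0 ≤ B i) (h : ∀ i j, Kabs Fq (M i j) ≤ B i) :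
    Kabs Fq M.det ≤ ∏ i, B i := by
  rw [Matrix.det_apply']
  refine Kabs_sum_le _ _ (Finset.prod_nonneg fun i _ => hB i) ?_
  intro σ _
  have hsgn : Kabs Fq (((Equiv.Perm.sign σ : ℤ) : Kt Fq) * ∏ i, M (σ i) i)
      = Kabs Fq (∏ i, M (σ i) i) := by
    rcases Int.units_eq_one_or (Equiv.Perm.sign σ) with h1 | h1 <;> rw [h1]
    · simp only [Units.val_one, Int.cast_one, one_mul]
    · simp only [Units.val_neg, Units.val_one, Int.cast_neg, Int.cast_one]
      rw [show (-1 : Kt Fq) * (∏ i, M (σ i) i) = -(∏ i, M (σ i) i) from by ring, Kabs_neg]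
  rw [hsgn, Kabs_prod]
  calc ∏ i, Kabs Fq (M (σ i) i) ≤ ∏ i, B (σ i) :=
        Finset.prod_le_prod (fun i _ => Kabs_nonneg _) (fun i _ => h (σ i) i)
    _ = ∏ i, B i := Equiv.prod_comp σ B

lemma mul_coeff_of_lt {f g : Kt Fq} {mf mg : ℤ} (hf : ∀ n < mf, f.coeff n = 0)
    (hg : ∀ n < mg, g.coeff n = 0) :
    (f * g).coeff (mf + mg) = f.coeff mf * g.coeff mg := by
  rw [HahnSeries.coeff_mul]
  rw [Finset.sum_eq_single (mf, mg)]
  · intro b hb hne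
    rw [Finset.mem_addAntidiagonal] at hb
    obtain ⟨h1, h2, h3⟩ := hb
    have hb1 : mf ≤ b.1 := le_of_not_gt fun hlt => h1 (hf _ hlt)
    have hb2 : mg ≤ b.2 := le_of_not_gt fun hlt => h2 (hg _ hlt)
    have : b.1 = mf ∧ b.2 = mg := by omega
    exact absurd (Prod.ext this.1 this.2) hne
  · intro hmem
    rw [Finset.mem_addAntidiagonal] at hmem
    by_cases h1 : f.coeff mf = 0
    · rw [h1, zero_mul]
    by_cases h2 : g.coeff mg = 0
    · rw [h2, mul_zero]
    exact absurd ⟨h1, h2, rfl⟩ hmem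

lemma mul_coeff_zero_of_lt {f g : Kt Fq} {mf mg : ℤ} (hf : ∀ n < mf, f.coeff n = 0)
    (hg : ∀ n < mg, g.coeff n = 0) : ∀ n < mf + mg, (f * g).coeff n = 0 := by
  intro n hn
  rw [HahnSeries.coeff_mul]
  refine Finset.sum_eq_zero fun b hb => ?_
  rw [Finset.mem_addAntidiagonal] at hb
  obtain ⟨h1, h2, h3⟩ := hb
  have hb1 : mf ≤ b.1 := le_of_not_gt fun hlt => h1 (hf _ hlt)
  have hb2 : mg ≤ b.2 := le_of_not_gt fun hlt => h2 (hg _ hlt)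
  omega

lemma prod_coeff_zero_of_lt {ι : Type*} (s : Finset ι) (f : ι → Kt Fq) (m : ι → ℤ)
    (h : ∀ i ∈ s, ∀ n < m i, (f i).coeff n = 0) :
    ∀ n < ∑ i ∈ s, m i, (∏ i ∈ s, f i).coeff n = 0 := by
  induction s using Finset.cons_induction with
  | empty =>
    intro n hn
    simp only [Finset.sum_empty] at hn
    simp [HahnSeries.coeff_one, ne_of_lt hn]
  | cons a s ha ih =>
    rw [Finset.prod_cons, Finset.sum_cons]
    exact mul_coeff_zero_of_lt (h a (Finset.mem_cons_self a s))
      (ih fun i hi => h i (Finset.mem_cons_of_mem hi))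

lemma prod_coeff_of_lt {ι : Type*} (s : Finset ι) (f : ι → Kt Fq) (m : ι → ℤ)
    (h : ∀ i ∈ s, ∀ n < m i, (f i).coeff n = 0) :
    (∏ i ∈ s, f i).coeff (∑ i ∈ s, m i) = ∏ i ∈ s, (f i).coeff (m i) := by
  induction s using Finset.cons_induction with
  | empty => simp [HahnSeries.coeff_one]
  | cons a s ha ih =>
    rw [Finset.prod_cons, Finset.sum_cons, Finset.prod_cons,
      mul_coeff_of_lt (h a (Finset.mem_cons_self a s))
        (prod_coeff_zero_of_lt s f m fun i hi => h i (Finset.mem_cons_of_mem hi)),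
      ih fun i hi => h i (Finset.mem_cons_of_mem hi)]

end Aux2

section Aux2b
set_option linter.unusedSectionVars false
variable {Fq}

lemma sum_coeff {ι : Type*} (s : Finset ι) (f : ι → Kt Fq) (n : ℤ) :
    (∑ i ∈ s, f i).coeff n = ∑ i ∈ s, (f i).coeff n := by
  induction s using Finset.cons_induction with
  | empty => simp
  | cons a s ha ih => rw [Finset.sum_cons, Finset.sum_cons, HahnSeries.coeff_add, ih]

end Aux2b

section Aux3
set_option linter.unusedSectionVars false
set_option maxHeartbeats 1000000

variable {Fq}

/-- The `j`-th column of `g * C.map polyK`, as a vector of the lattice. -/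
def colsB {d : ℕ} (g : Matrix (Fin d) (Fin d) (Kt Fq))
    (C : Matrix (Fin d) (Fin d) (Polynomial Fq)) : Fin d → Fin d → Kt Fq :=
  fun j i => (g * C.map (polyK Fq)) i j

lemma colsB_mem {d : ℕ} (g : Matrix (Fin d) (Fin d) (Kt Fq))
    (C : Matrix (Fin d) (Fin d) (Polynomial Fq)) (j : Fin d) :
    colsB g C j ∈ lattice Fq g := by
  refine ⟨fun l => C l j, funext fun i => ?_⟩
  simp [colsB, Matrix.mul_apply, Matrix.mulVec, dotProduct, Matrix.map_apply]

lemma polyK_C (r : Fq) : polyK Fq (Polynomial.C r) = HahnSeries.single (0 : ℤ) r := by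
  show Polynomial.aeval (Kx Fq) (Polynomial.C r) = _
  rw [Polynomial.aeval_C, HahnSeries.algebraMap_apply']
  show (HahnSeries.ofPowerSeries ℤ Fq) (PowerSeries.C (R := Fq) r) = _
  rw [HahnSeries.ofPowerSeries_C, HahnSeries.C_apply]

lemma Kabs_polyK_unit {p : Polynomial Fq} (hp : IsUnit p) :
    Kabs Fq (polyK Fq p) = 1 ∧ polyK Fq p ≠ 0 := by
  obtain ⟨r, hr, rfl⟩ := Polynomial.isUnit_iff.mp hp
  have hr0 : r ≠ 0 := hr.ne_zero
  rw [polyK_C]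
  refine ⟨?_, HahnSeries.single_ne_zero hr0⟩
  rw [Kabs_of_ne (HahnSeries.single_ne_zero hr0), HahnSeries.order_single hr0]
  simp

lemma polyK_CX (r : Fq) (e : ℕ) :
    polyK Fq (Polynomial.C r * Polynomial.X ^ e) = HahnSeries.single (-(e : ℤ)) r := by
  rw [map_mul, map_pow, polyK_C]
  have hX : polyK Fq Polynomial.X = Kx Fq := Polynomial.aeval_X _
  rw [hX]
  show HahnSeries.single (0:ℤ) r * (HahnSeries.single (-1 : ℤ) 1) ^ e = _
  rw [HahnSeries.single_pow, HahnSeries.single_mul_single]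
  congr 1
  · simp
  · simp

lemma exists_good_basis {d : ℕ} (hd : 1 ≤ d) (g : Matrix (Fin d) (Fin d) (Kt Fq))
    (hg : Kabs Fq g.det = 1) :
    ∃ b : Fin d → Fin d → Kt Fq, (∀ j, b j ∈ lattice Fq g) ∧ LinearIndependent (Kt Fq) b ∧
      ∏ j, vnorm Fq (b j) = 1 := by
  have hne : Nonempty (Fin d) := ⟨⟨0, hd⟩⟩
  have hmapdet : ∀ C : Matrix (Fin d) (Fin d) (Polynomial Fq),
      (C.map (polyK Fq)).det = polyK Fq C.det := by
    intro C
    rw [← RingHom.mapMatrix_apply, ← RingHom.map_det]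
  have hdet1 : ∀ C : Matrix (Fin d) (Fin d) (Polynomial Fq), IsUnit C.det →
      Kabs Fq (g * C.map (polyK Fq)).det = 1 := by
    intro C hC
    rw [Matrix.det_mul, hmapdet, Kabs_mul, hg, one_mul, (Kabs_polyK_unit hC).1]
  have hdetne : ∀ C : Matrix (Fin d) (Fin d) (Polynomial Fq), IsUnit C.det →
      (g * C.map (polyK Fq)).det ≠ 0 := by
    intro C hC h0
    have := hdet1 C hC
    rw [h0, Kabs_zero] at this
    norm_num at this
  have hindep : ∀ C : Matrix (Fin d) (Fin d) (Polynomial Fq), IsUnit C.det →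
      LinearIndependent (Kt Fq) (colsB g C) := by
    intro C hC
    have := Matrix.linearIndependent_cols_iff_isUnit.mpr
      ((Matrix.isUnit_iff_isUnit_det _).mpr (isUnit_iff_ne_zero.mpr (hdetne C hC)))
    exact this
  have hcolne : ∀ C : Matrix (Fin d) (Fin d) (Polynomial Fq), IsUnit C.det →
      ∀ j, colsB g C j ≠ 0 := fun C hC j => (hindep C hC).ne_zero j
  have hhad : ∀ C : Matrix (Fin d) (Fin d) (Polynomial Fq), IsUnit C.det →
      (1:ℝ) ≤ ∏ j, vnorm Fq (colsB g C j) := by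
    intro C hC
    have h2 : Kabs Fq (Matrix.transpose (g * C.map (polyK Fq))).det ≤ ∏ j, vnorm Fq (colsB g C j) := by
      refine Kabs_det_le _ _ (fun j => vnorm_nonneg _) ?_
      intro j i
      exact Kabs_le_vnorm (colsB g C j) i
    rw [Matrix.det_transpose, hdet1 C hC] at h2
    exact h2
  have hm : ∀ C : Matrix (Fin d) (Fin d) (Polynomial Fq), IsUnit C.det →
      ∃ m : Fin d → ℤ, (∀ j, vnorm Fq (colsB g C j) = qR Fq ^ (-(m j))) ∧
        (∀ j i, Kabs Fq (colsB g C j i) ≤ qR Fq ^ (-(m j))) ∧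
        (∀ j, ∃ i, (colsB g C j i).coeff (m j) ≠ 0) := by
    intro C hC
    choose m h1 h2 h3 using fun j => exists_vnorm_zpow (hcolne C hC j)
    exact ⟨m, h1, h2, h3⟩
  have hpow : ∀ C : Matrix (Fin d) (Fin d) (Polynomial Fq), IsUnit C.det →
      ∃ n : ℤ, ∏ j, vnorm Fq (colsB g C j) = qR Fq ^ n := by
    intro C hC
    obtain ⟨m, h1, -, -⟩ := hm C hC
    refine ⟨∑ j, -(m j), ?_⟩
    rw [← zpow_prod_eq]
    exact Finset.prod_congr rfl fun j _ => h1 j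
  set P : ℤ → Prop := fun n => ∃ C : Matrix (Fin d) (Fin d) (Polynomial Fq),
    IsUnit C.det ∧ ∏ j, vnorm Fq (colsB g C j) = qR Fq ^ n with hP
  have Hinh : ∃ n, P n := by
    obtain ⟨n, hn⟩ := hpow 1 (by simp)
    exact ⟨n, 1, by simp, hn⟩
  have Hbdd : ∃ c : ℤ, ∀ z : ℤ, P z → c ≤ z := by
    refine ⟨0, fun z hz => ?_⟩
    obtain ⟨C, hC, hprod⟩ := hz
    have h1 := hhad C hC
    rw [hprod, ← zpow_zero (qR Fq)] at h1
    exact (zpow_le_zpow_iff_right₀ (one_lt_qR Fq)).mp h1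
  obtain ⟨n₀, ⟨C₀, hC₀, hprod₀⟩, hminimal⟩ := Int.exists_least_of_bdd Hbdd Hinh
  set b : Fin d → Fin d → Kt Fq := colsB g C₀ with hb
  obtain ⟨m, hm1, hm2, hm3⟩ := hm C₀ hC₀
  have hvanish : ∀ t (i : Fin d), ∀ n : ℤ, n < m t → (b t i).coeff n = 0 :=
    fun t i n hn => coeff_eq_zero_of_Kabs_le (hm2 t i) hn
  set U : Matrix (Fin d) (Fin d) Fq := Matrix.of fun i j => (b j i).coeff (m j) with hU
  by_cases hUdet : U.det = 0
  · -- reduction step: contradiction with minimality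
    exfalso
    obtain ⟨a, ha0, ha⟩ := Matrix.exists_mulVec_eq_zero_iff.mpr hUdet
    set supp : Finset (Fin d) := Finset.univ.filter (fun j => a j ≠ 0) with hsupp
    have hsuppne : supp.Nonempty := by
      obtain ⟨j, hj⟩ : ∃ j, a j ≠ 0 := by
        by_contra hcon; push_neg at hcon; exact ha0 (funext hcon)
      exact ⟨j, by simp [hsupp, hj]⟩
    obtain ⟨j₀, hj₀supp, hj₀min⟩ := Finset.exists_min_image supp m hsuppne
    have haj₀ : a j₀ ≠ 0 := by simpa [hsupp] using hj₀supp
    set E : Matrix (Fin d) (Fin d) (Polynomial Fq) :=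
      (1 : Matrix (Fin d) (Fin d) (Polynomial Fq)).updateCol j₀
        (fun i => Polynomial.C (a i) * Polynomial.X ^ ((m i - m j₀).toNat)) with hE
    have hdetE : E.det = Polynomial.C (a j₀) := by
      have h := Matrix.cramer_apply (1 : Matrix (Fin d) (Fin d) (Polynomial Fq))
        (fun i => Polynomial.C (a i) * Polynomial.X ^ ((m i - m j₀).toNat)) j₀
      rw [Matrix.cramer_one] at h
      rw [hE, ← h]
      simp
    have hEu : IsUnit E.det := by
      rw [hdetE]
      exact Polynomial.isUnit_C.mpr (isUnit_iff_ne_zero.mpr haj₀)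
    have hC' : IsUnit (C₀ * E).det := by
      rw [Matrix.det_mul]
      exact hC₀.mul hEu
    have hmulE : ∀ (i : Fin d) j, colsB g (C₀ * E) j i = ∑ t, b t i * polyK Fq (E t j) := by
      intro i j
      show (g * (C₀ * E).map (polyK Fq)) i j = _
      rw [Matrix.map_mul, ← Matrix.mul_assoc, Matrix.mul_apply]
      refine Finset.sum_congr rfl fun t _ => ?_
      rw [Matrix.map_apply]
      rfl
    have hcol_ne : ∀ j, j ≠ j₀ → colsB g (C₀ * E) j = b j := by
      intro j hj
      funext i
      rw [hmulE i j, Finset.sum_eq_single j]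
      · rw [hE, Matrix.updateCol_ne hj, Matrix.one_apply_eq, map_one, mul_one]
      · intro t _ ht
        rw [hE, Matrix.updateCol_ne hj, Matrix.one_apply_ne ht, map_zero, mul_zero]
      · intro hmem
        exact absurd (Finset.mem_univ j) hmem
    have hEcol : ∀ t, E t j₀ = Polynomial.C (a t) * Polynomial.X ^ ((m t - m j₀).toNat) := by
      intro t
      rw [hE, Matrix.updateCol_self]
    have hsingle : ∀ t, a t ≠ 0 → polyK Fq (E t j₀) =
        HahnSeries.single (m j₀ - m t) (a t) := by
      intro t hat
      have htj : m j₀ ≤ m t := hj₀min t (by simp [hsupp, hat])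
      have hidx : -(((m t - m j₀).toNat : ℤ)) = m j₀ - m t := by
        rw [Int.toNat_of_nonneg (by omega : (0:ℤ) ≤ m t - m j₀)]
        ring
      rw [hEcol t, polyK_CX, hidx]
    have hcoeffnew : ∀ (i : Fin d), ∀ n : ℤ, n < m j₀ + 1 →
        (colsB g (C₀ * E) j₀ i).coeff n = 0 := by
      intro i n hn
      rw [hmulE i j₀, sum_coeff]
      have hterm : ∀ t, (b t i * polyK Fq (E t j₀)).coeff n
          = a t * (b t i).coeff (n - m j₀ + m t) := by
        intro t
        by_cases hat : a t = 0
        · rw [hEcol t, hat]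
          simp
        · rw [mul_comm, hsingle t hat]
          have hsm := HahnSeries.coeff_single_mul_add (r := a t) (x := b t i)
            (a := n - m j₀ + m t) (b := m j₀ - m t)
          rw [show n - m j₀ + m t + (m j₀ - m t) = n from by ring] at hsm
          exact hsm
      rw [Finset.sum_congr rfl fun t _ => hterm t]
      by_cases hcase : n < m j₀
      · refine Finset.sum_eq_zero fun t _ => ?_
        rw [hvanish t i _ (by omega), mul_zero]
      · have hnm : n = m j₀ := by omega
        subst hnm
        have : ∀ t ∈ Finset.univ, a t * (b t i).coeff (m j₀ - m j₀ + m t)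
            = U i t * a t := by
          intro t _
          rw [mul_comm]
          congr 2
          omega
        rw [Finset.sum_congr rfl this]
        have := congrFun ha i
        simpa [Matrix.mulVec, dotProduct] using this
    have hnormnew : vnorm Fq (colsB g (C₀ * E) j₀) ≤ qR Fq ^ (-(m j₀ + 1)) :=
      ciSup_le fun i => Kabs_le_of_forall_coeff fun n hn => hcoeffnew i n hn
    obtain ⟨n', hn'⟩ := hpow (C₀ * E) hC'
    have hn'P : P n' := ⟨C₀ * E, hC', hn'⟩
    have hrest : (0:ℝ) ≤ ∏ j ∈ Finset.univ.erase j₀, vnorm Fq (b j) :=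
      Finset.prod_nonneg fun j _ => vnorm_nonneg _
    have split_new : ∏ j, vnorm Fq (colsB g (C₀ * E) j)
        = vnorm Fq (colsB g (C₀ * E) j₀) * ∏ j ∈ Finset.univ.erase j₀, vnorm Fq (b j) := by
      rw [← Finset.mul_prod_erase Finset.univ _ (Finset.mem_univ j₀)]
      congr 1
      exact Finset.prod_congr rfl fun j hj => by
        rw [hcol_ne j (Finset.ne_of_mem_erase hj)]
    have split_old : qR Fq ^ n₀
        = qR Fq ^ (-(m j₀)) * ∏ j ∈ Finset.univ.erase j₀, vnorm Fq (b j) := by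
      rw [← hprod₀, ← Finset.mul_prod_erase Finset.univ _ (Finset.mem_univ j₀), hm1 j₀]
    have hmono : qR Fq ^ n' ≤ qR Fq ^ (n₀ - 1) := by
      rw [← hn', split_new]
      calc vnorm Fq (colsB g (C₀ * E) j₀) * ∏ j ∈ Finset.univ.erase j₀, vnorm Fq (b j)
          ≤ qR Fq ^ (-(m j₀ + 1)) * ∏ j ∈ Finset.univ.erase j₀, vnorm Fq (b j) :=
            mul_le_mul_of_nonneg_right hnormnew hrest
        _ = qR Fq ^ (-1 : ℤ) *
            (qR Fq ^ (-(m j₀)) * ∏ j ∈ Finset.univ.erase j₀, vnorm Fq (b j)) := by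
            rw [← mul_assoc, ← zpow_add₀ (qR_ne_zero Fq)]
            congr 2
            ring
        _ = qR Fq ^ (-1 : ℤ) * qR Fq ^ n₀ := by rw [← split_old]
        _ = qR Fq ^ (n₀ - 1) := by
            rw [← zpow_add₀ (qR_ne_zero Fq)]
            congr 1
            ring
    have h1 : n' ≤ n₀ - 1 := (zpow_le_zpow_iff_right₀ (one_lt_qR Fq)).mp hmono
    have h2 := hminimal n' hn'P
    omega
  · -- the minimum is 1 : conclude
    refine ⟨b, fun j => colsB_mem g C₀ j, hindep C₀ hC₀, ?_⟩
    set N : ℤ := ∑ j, m j with hN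
    have hBdet : ((g * C₀.map (polyK Fq)).det).coeff N = U.det := by
      rw [Matrix.det_apply', sum_coeff]
      rw [Matrix.det_apply' U]
      refine Finset.sum_congr rfl fun σ _ => ?_
      have hprodcoeff : (∏ i, (g * C₀.map (polyK Fq)) (σ i) i).coeff N
          = ∏ i, U (σ i) i := by
        have := prod_coeff_of_lt (Finset.univ : Finset (Fin d))
          (fun i => (g * C₀.map (polyK Fq)) (σ i) i) m
          (fun i _ n hn => hvanish i (σ i) n hn)
        rw [← hN] at this
        rw [this]
        rfl
      rcases Int.units_eq_one_or (Equiv.Perm.sign σ) with h1 | h1 <;> rw [h1]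
      · simp only [Units.val_one, Int.cast_one, one_mul]
        exact hprodcoeff
      · simp only [Units.val_neg, Units.val_one, Int.cast_neg, Int.cast_one]
        rw [show (-1 : Kt Fq) * (∏ i, (g * C₀.map (polyK Fq)) (σ i) i)
            = -(∏ i, (g * C₀.map (polyK Fq)) (σ i) i) from by ring,
          HahnSeries.coeff_neg, hprodcoeff]
        rw [show (-1 : Fq) * (∏ i, U (σ i) i) = -(∏ i, U (σ i) i) from by ring]
    have hlow : qR Fq ^ (-N) ≤ Kabs Fq ((g * C₀.map (polyK Fq)).det) :=
      zpow_le_Kabs_of_coeff_ne (by rw [hBdet]; exact hUdet)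
    rw [hdet1 C₀ hC₀] at hlow
    have hprodval : ∏ j, vnorm Fq (b j) = qR Fq ^ (-N) := by
      have : ∏ j, vnorm Fq (b j) = ∏ j, qR Fq ^ (-(m j)) :=
        Finset.prod_congr rfl fun j _ => hm1 j
      rw [this, zpow_prod_eq]
      congr 1
      rw [hN, ← Finset.sum_neg_distrib]
    rw [hprodval]
    exact le_antisymm hlow (by rw [← hprodval]; exact hhad C₀ hC₀)

end Aux3
section Aux4
set_option linter.unusedSectionVars false
variable {Fq}

lemma prod_head_le_one {d k : ℕ} (hk1 : 1 ≤ k) (hk : k ≤ d) (μ : Fin d → ℝ)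
    (hpos : ∀ i, 0 < μ i) (hmono : Monotone μ) (hprod : ∏ i, μ i ≤ 1) :
    ∏ s : Fin k, μ (Fin.castLE hk s) ≤ 1 := by
  have hd1 : 1 ≤ d := le_trans hk1 hk
  set ν : ℕ → ℝ := fun n => μ ⟨min n (d-1), by omega⟩ with hν
  have hνpos : ∀ n, 0 < ν n := fun n => hpos _
  have hνmono : ∀ {p q : ℕ}, p ≤ q → ν p ≤ ν q := by
    intro p q hpq
    refine hmono ?_
    simp only [Fin.mk_le_mk]
    omega
  have hA : ∏ s : Fin k, μ (Fin.castLE hk s) = ∏ n ∈ Finset.range k, ν n := by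
    rw [← Fin.prod_univ_eq_prod_range]
    refine Finset.prod_congr rfl fun s _ => ?_
    congr 1
    apply Fin.ext
    simp only [Fin.coe_castLE]
    omega
  have hT : ∏ i, μ i = ∏ n ∈ Finset.range d, ν n := by
    rw [← Fin.prod_univ_eq_prod_range]
    refine Finset.prod_congr rfl fun i _ => ?_
    congr 1
    apply Fin.ext
    simp only []
    omega
  set A := ∏ n ∈ Finset.range k, ν n with hAdef
  set Bk := ∏ n ∈ Finset.Ico k d, ν n with hBdef
  have hsplit : A * Bk = ∏ n ∈ Finset.range d, ν n := Finset.prod_range_mul_prod_Ico ν hk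
  have hApos : 0 < A := Finset.prod_pos fun n _ => hνpos n
  have hAle : A ≤ ν (k-1) ^ k := by
    calc A ≤ ∏ n ∈ Finset.range k, ν (k-1) :=
          Finset.prod_le_prod (fun n _ => (hνpos n).le)
            (fun n hn => hνmono (by simp only [Finset.mem_range] at hn; omega))
      _ = ν (k-1) ^ k := by rw [Finset.prod_const, Finset.card_range]
  have hBge : ν (k-1) ^ (d - k) ≤ Bk := by
    calc ν (k-1) ^ (d-k) = ∏ n ∈ Finset.Ico k d, ν (k-1) := by
          rw [Finset.prod_const, Nat.card_Ico]
      _ ≤ Bk := Finset.prod_le_prod (fun n _ => (hνpos _).le)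
          (fun n hn => hνmono (by simp only [Finset.mem_Ico] at hn; omega))
  have hpowle : A ^ d ≤ 1 := by
    have h1 : A ^ d = A ^ k * A ^ (d - k) := by rw [← pow_add]; congr 1; omega
    have h2 : A ^ (d-k) ≤ (ν (k-1) ^ k) ^ (d-k) := pow_le_pow_left₀ hApos.le hAle _
    have h3 : (ν (k-1) ^ k) ^ (d-k) = (ν (k-1) ^ (d-k)) ^ k := by
      rw [← pow_mul, ← pow_mul, Nat.mul_comm]
    have h4 : (ν (k-1) ^ (d-k)) ^ k ≤ Bk ^ k :=
      pow_le_pow_left₀ (pow_nonneg (hνpos _).le _) hBge k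
    calc A ^ d = A ^ k * A ^ (d-k) := h1
      _ ≤ A ^ k * Bk ^ k := by
          exact mul_le_mul_of_nonneg_left (le_trans h2 (le_trans (le_of_eq h3) h4))
            (pow_nonneg hApos.le k)
      _ = (A * Bk) ^ k := (mul_pow A Bk k).symm
      _ ≤ 1 := by
          rw [hsplit, ← hT]
          exact pow_le_one₀ (Finset.prod_nonneg fun i _ => (hpos i).le) hprod
  rw [hA]
  exact (pow_le_one_iff_of_nonneg hApos.le (by omega : d ≠ 0)).mp hpowle

end Aux4
/-- If `v₁,…,v_d` is a set of successive minima vectors of a unimodular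
lattice, then for every `1 ≤ k ≤ d` the wedge product `v₁ ∧ … ∧ v_k` has norm at most `1`,
where the norm on `⋀^k K̃^d` is the maximum of the absolute values of the coordinates with
respect to the standard basis (i.e. of the `k×k` minors). -/
theorem wedge_norm_le_one {d : ℕ} (hd : 2 ≤ d)
    (g : Matrix (Fin d) (Fin d) (Kt Fq)) (hg : Kabs Fq g.det = 1)
    (v : Fin d → Fin d → Kt Fq)
    (hvmem : ∀ i, v i ∈ lattice Fq g)
    (hind : LinearIndependent (Kt Fq) v)
    (hmin : ∀ i : Fin d, vnorm Fq (v i) = minima Fq (lattice Fq g) ((i : ℕ) + 1)) :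
    ∀ (k : ℕ), 1 ≤ k → ∀ hk : k ≤ d,
      (⨆ J : {J : Fin k → Fin d // StrictMono J},
        Kabs Fq (Matrix.of fun s t : Fin k => v (Fin.castLE hk s) (J.1 t)).det) ≤ 1 := by
  intro k hk1 hk
  have hd1 : 1 ≤ d := le_trans hk1 hk
  have hne : Nonempty (Fin d) := ⟨⟨0, hd1⟩⟩
  obtain ⟨b, hbmem, hbind, hbprod⟩ := exists_good_basis hd1 g hg
  set σ : Equiv.Perm (Fin d) := Tuple.sort (fun j => vnorm Fq (b j)) with hσ
  set μ : Fin d → ℝ := fun j => vnorm Fq (b (σ j)) with hμ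
  have hμmono : Monotone μ := Tuple.monotone_sort (fun j => vnorm Fq (b j))
  have hμpos : ∀ j, 0 < μ j := fun j => vnorm_pos ((hbind.comp σ σ.injective).ne_zero j)
  have hμprod : ∏ j, μ j = 1 := by
    rw [hμ]
    rw [Equiv.prod_comp σ (fun j => vnorm Fq (b j))]
    exact hbprod
  have hminle : ∀ i : Fin d, minima Fq (lattice Fq g) ((i:ℕ)+1) ≤ μ i := by
    intro i
    have hsucc : (i:ℕ)+1 ≤ d := i.isLt
    have hmem : μ i ∈ {r : ℝ | 0 < r ∧ ∃ w : Fin ((i:ℕ)+1) → Fin d → Kt Fq,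
        (∀ j, w j ∈ lattice Fq g) ∧ LinearIndependent (Kt Fq) w ∧
        ∀ j, vnorm Fq (w j) ≤ r} := by
      refine ⟨hμpos i, fun j => b (σ (Fin.castLE hsucc j)), fun j => hbmem _, ?_, ?_⟩
      · exact hbind.comp (σ ∘ Fin.castLE hsucc)
          (σ.injective.comp (Fin.castLE_injective hsucc))
      · intro j
        refine hμmono ?_
        have := j.isLt
        simp only [Fin.le_def, Fin.coe_castLE]
        omega
    exact csInf_le ⟨0, fun r hr => hr.1.le⟩ hmem
  have hnonemptyJ : Nonempty {J : Fin k → Fin d // StrictMono J} :=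
    ⟨⟨Fin.castLE hk, Fin.strictMono_castLE hk⟩⟩
  refine ciSup_le fun J => ?_
  have h1 : Kabs Fq (Matrix.of fun s t : Fin k => v (Fin.castLE hk s) (J.1 t)).det
      ≤ ∏ s : Fin k, vnorm Fq (v (Fin.castLE hk s)) := by
    refine Kabs_det_le _ _ (fun s => vnorm_nonneg _) ?_
    intro s t
    exact Kabs_le_vnorm (v (Fin.castLE hk s)) (J.1 t)
  refine le_trans h1 ?_
  have h2 : ∀ s : Fin k, vnorm Fq (v (Fin.castLE hk s)) ≤ μ (Fin.castLE hk s) := by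
    intro s
    rw [hmin (Fin.castLE hk s)]
    exact hminle (Fin.castLE hk s)
  refine le_trans (Finset.prod_le_prod (fun s _ => vnorm_nonneg _) (fun s _ => h2 s)) ?_
  exact prod_head_le_one hk1 hk μ hμpos hμmono (le_of_eq hμprod)
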